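/- Let G be a finite simple connected graph of order n ≥ 2 with m edges, average degree d̄ = 2m/n, and chromatic number χ(G). Then χ(G) ≤ 2·AG(G)/d̄, with equality if and only if G is isomorphic to the complete graph K_n. -/

import Mathlib

open SimpleGraph Finset

/-- The degree of a vertex, as a natural number (classical, to avoid decidability assumptions). -/
noncomputable def ndeg {V : Type*} [Fintype V] (G : SimpleGraph V) (v : V) : ℕ :=
  letI := Classical.decRel G.Adj
  G.degree v

/-- The degree of a vertex, as a real number. -/
noncomputable def deg {V : Type*} [Fintype V] (G : SimpleGraph V) (v : V) : ℝ :=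
  (ndeg G v : ℝ)

/-- For a symmetric function `f`, `edgeSum G f = Σ_{uv ∈ E(G)} f (d_u) (d_v)`:
each unordered edge is counted twice in the double sum, hence the factor `1/2`. -/
noncomputable def edgeSum {V : Type*} [Fintype V] (G : SimpleGraph V) (f : ℝ → ℝ → ℝ) : ℝ :=
  letI := Classical.decRel G.Adj
  (1 / 2) * ∑ u : V, ∑ w : V, if G.Adj u w then f (deg G u) (deg G w) else 0

/-- The arithmetic-geometric index `AG(G) = Σ_{uv ∈ E(G)} (1/2)(√(d_u/d_v) + √(d_v/d_u))`. -/
noncomputable def AG {V : Type*} [Fintype V] (G : SimpleGraph V) : ℝ :=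
  edgeSum G (fun x y => (Real.sqrt (x / y) + Real.sqrt (y / x)) / 2)

/-- The first geometric-arithmetic index `GA(G) = Σ_{uv ∈ E(G)} 2√(d_u d_v)/(d_u + d_v)`. -/
noncomputable def GA {V : Type*} [Fintype V] (G : SimpleGraph V) : ℝ :=
  edgeSum G (fun x y => 2 * Real.sqrt (x * y) / (x + y))

/-- The forgotten index `F(G) = Σ_{uv ∈ E(G)} (d_u² + d_v²)`. -/
noncomputable def forgottenIndex {V : Type*} [Fintype V] (G : SimpleGraph V) : ℝ :=
  edgeSum G (fun x y => x ^ 2 + y ^ 2)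

/-- The first Zagreb index `M₁(G) = Σ_{uv ∈ E(G)} (d_u + d_v)`. -/
noncomputable def M1 {V : Type*} [Fintype V] (G : SimpleGraph V) : ℝ :=
  edgeSum G (fun x y => x + y)

/-- The second Zagreb index `M₂(G) = Σ_{uv ∈ E(G)} d_u d_v`. -/
noncomputable def M2 {V : Type*} [Fintype V] (G : SimpleGraph V) : ℝ :=
  edgeSum G (fun x y => x * y)

/-- The symmetric division deg index `SDD(G) = Σ_{uv ∈ E(G)} (d_u/d_v + d_v/d_u)`. -/
noncomputable def SDD {V : Type*} [Fintype V] (G : SimpleGraph V) : ℝ :=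
  edgeSum G (fun x y => x / y + y / x)

/-- The atom-bond connectivity index `ABC(G) = Σ_{uv ∈ E(G)} √((d_u + d_v − 2)/(d_u d_v))`. -/
noncomputable def ABC {V : Type*} [Fintype V] (G : SimpleGraph V) : ℝ :=
  edgeSum G (fun x y => Real.sqrt ((x + y - 2) / (x * y)))

/-- `G` is `(s,r)`-semiregular: its vertex set is the disjoint union of two nonempty sets,
all vertices of the first having degree `s` and all vertices of the second degree `r`. -/
def IsSemiregular {V : Type*} [Fintype V] (G : SimpleGraph V) (s r : ℕ) : Prop :=
  ∃ V₁ V₂ : Set V, V₁.Nonempty ∧ V₂.Nonempty ∧ Disjoint V₁ V₂ ∧ V₁ ∪ V₂ = Set.univ ∧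
    (∀ v ∈ V₁, ndeg G v = s) ∧ (∀ v ∈ V₂, ndeg G v = r)

/-- The `AG`-analogue of Conjecture 1 (Aouchiche–Hansen), which the paper proves:
`χ(G) ≤ 2 AG(G)/d̄` with equality iff `G ≅ Kₙ`. -/
-- double sum of ones equals 2 * #edges
lemma aux_sum_one {V : Type*} [Fintype V] (G : SimpleGraph V) :
    letI := Classical.decRel G.Adj
    ∑ u : V, ∑ w : V, (if G.Adj u w then (1:ℝ) else 0) = 2 * (G.edgeSet.ncard : ℝ) := by
  letI := Classical.decRel G.Adj
  have h1 : ∀ u : V, ∑ w : V, (if G.Adj u w then (1:ℝ) else 0) = (G.degree u : ℝ) := by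
    intro u
    rw [Finset.sum_boole]
    congr 1
    simp [SimpleGraph.degree, neighborFinset_eq_filter]
  simp only [h1]
  rw [← Nat.cast_sum, SimpleGraph.sum_degrees_eq_twice_card_edges]
  have : G.edgeSet.ncard = G.edgeFinset.card := by
    rw [Set.ncard_eq_toFinset_card']
    congr 1
  rw [this]; push_cast; ring

lemma aux_deg_pos {V : Type*} [Fintype V] (G : SimpleGraph V) (hG : G.Connected)
    (hc : 2 ≤ Fintype.card V) (v : V) : 0 < ndeg G v := by
  letI := Classical.decRel G.Adj
  obtain ⟨w, hw⟩ := Fintype.exists_ne_of_one_lt_card (by omega) v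
  obtain ⟨p⟩ := hG.preconnected v w
  show 0 < G.degree v
  rw [SimpleGraph.degree_pos_iff_exists_adj]
  cases p with
  | nil => exact absurd rfl hw
  | cons h q => exact ⟨_, h⟩

lemma aux_term_ge_one {a b : ℝ} (ha : 0 < a) (hb : 0 < b) :
    1 ≤ (Real.sqrt (a / b) + Real.sqrt (b / a)) / 2 := by
  have hs : 0 < Real.sqrt (a / b) := Real.sqrt_pos.2 (by positivity)
  have ht : 0 < Real.sqrt (b / a) := Real.sqrt_pos.2 (by positivity)
  have h1 : Real.sqrt (a / b) * Real.sqrt (b / a) = 1 := by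
    rw [← Real.sqrt_mul (by positivity)]
    rw [div_mul_div_comm]
    rw [show a * b / (b * a) = 1 by rw [mul_comm b a]; field_simp]
    exact Real.sqrt_one
  nlinarith [sq_nonneg (Real.sqrt (a / b) - 1)]

lemma aux_AG_ge {V : Type*} [Fintype V] (G : SimpleGraph V)
    (hd : ∀ v, 0 < ndeg G v) : (G.edgeSet.ncard : ℝ) ≤ AG G := by
  letI := Classical.decRel G.Adj
  have key := aux_sum_one G
  unfold AG edgeSum
  have hle : ∑ u : V, ∑ w : V, (if G.Adj u w then (1:ℝ) else 0) ≤
      ∑ u : V, ∑ w : V, (if G.Adj u w then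
        (Real.sqrt (deg G u / deg G w) + Real.sqrt (deg G w / deg G u)) / 2 else 0) := by
    apply Finset.sum_le_sum; intro u _
    apply Finset.sum_le_sum; intro w _
    by_cases h : G.Adj u w
    · simp only [h, if_true]
      exact aux_term_ge_one (by unfold deg; exact_mod_cast hd u)
        (by unfold deg; exact_mod_cast hd w)
    · simp [h]
  rw [key] at hle
  linarith

lemma aux_not_complete {V : Type*} [Fintype V] (G : SimpleGraph V) {u v : V}
    (hne : u ≠ v) (hna : ¬ G.Adj u v) :
    G.chromaticNumber ≤ (Fintype.card V - 1 : ℕ) := by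
  classical
  have C : G.Coloring {x : V // x ≠ v} := SimpleGraph.Coloring.mk
    (fun x => if h : x = v then ⟨u, hne⟩ else ⟨x, h⟩)
    (by
      intro a b hab
      show (if h : a = v then (⟨u, hne⟩ : {x : V // x ≠ v}) else ⟨a, h⟩) ≠
        (if h : b = v then ⟨u, hne⟩ else ⟨b, h⟩)
      by_cases ha : a = v <;> by_cases hb : b = v
      · exact absurd (ha.trans hb.symm) (G.ne_of_adj hab)
      · rw [dif_pos ha, dif_neg hb]
        intro h
        have hub : u = b := congrArg Subtype.val h
        subst hub; subst ha; exact hna hab.symm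
      · rw [dif_pos hb, dif_neg ha]
        intro h
        have hua : a = u := (congrArg Subtype.val h)
        subst hua; subst hb; exact hna hab
      · rw [dif_neg ha, dif_neg hb]
        intro h
        exact G.ne_of_adj hab (congrArg Subtype.val h))
  have := C.colorable.chromaticNumber_le
  rwa [Fintype.card_subtype_compl, Fintype.card_subtype_eq] at this

lemma aux_ndeg_top {V : Type*} [Fintype V] (v : V) :
    ndeg (⊤ : SimpleGraph V) v = Fintype.card V - 1 := by
  classical
  unfold ndeg
  convert SimpleGraph.complete_graph_degree v using 2 <;> exact Subsingleton.elim _ _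

lemma aux_AG_regular {V : Type*} [Fintype V] (G : SimpleGraph V) (d : ℕ) (hd : 0 < d)
    (h : ∀ v, ndeg G v = d) : AG G = (G.edgeSet.ncard : ℝ) := by
  letI := Classical.decRel G.Adj
  unfold AG edgeSum
  have key : ∀ u w : V, (if G.Adj u w then
      (Real.sqrt (deg G u / deg G w) + Real.sqrt (deg G w / deg G u)) / 2 else 0) =
      (if G.Adj u w then (1:ℝ) else 0) := by
    intro u w
    by_cases hadj : G.Adj u w
    · simp only [hadj, if_true]
      have hu : deg G u = (d:ℝ) := by unfold deg; rw [h]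
      have hw : deg G w = (d:ℝ) := by unfold deg; rw [h]
      rw [hu, hw, div_self (Nat.cast_ne_zero.2 hd.ne'), Real.sqrt_one]
      norm_num
    · simp [hadj]
  simp only [key]
  rw [aux_sum_one]
  ring


theorem stmt12 {V : Type*} [Fintype V] (G : SimpleGraph V) (hG : G.Connected)
    (n m χ : ℕ) (hn : Fintype.card V = n) (hn2 : 2 ≤ n)
    (hm : G.edgeSet.ncard = m)
    (hχ : G.chromaticNumber = (χ : ℕ∞)) :
    (χ : ℝ) ≤ 2 * AG G / (2 * (m : ℝ) / (n : ℝ)) ∧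
    ((χ : ℝ) = 2 * AG G / (2 * (m : ℝ) / (n : ℝ)) ↔
      Nonempty (G ≃g (⊤ : SimpleGraph (Fin n)))) := by

  letI := Classical.decRel G.Adj
  have hcard : 2 ≤ Fintype.card V := hn ▸ hn2
  have hdp : ∀ v, 0 < ndeg G v := aux_deg_pos G hG hcard
  have hAGm : (m:ℝ) ≤ AG G := hm ▸ aux_AG_ge G hdp
  have hVne : Nonempty V := Fintype.card_pos_iff.mp (by omega)
  obtain ⟨v⟩ := hVne
  have hm0 : 0 < m := by
    have hdv : 0 < G.degree v := hdp v
    rw [SimpleGraph.degree_pos_iff_exists_adj] at hdv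
    obtain ⟨w, hw⟩ := hdv
    have : G.edgeSet.Nonempty := ⟨s(v, w), hw⟩
    rw [← hm]
    exact (Set.ncard_pos (Set.toFinite _)).2 this
  have hn0 : (0:ℝ) < n := by exact_mod_cast (by omega : 0 < n)
  have hm0' : (0:ℝ) < m := by exact_mod_cast hm0
  have hR : 2 * AG G / (2 * (m:ℝ) / (n:ℝ)) = AG G * n / m := by
    field_simp
  have hnR : (n:ℝ) ≤ 2 * AG G / (2 * (m:ℝ) / (n:ℝ)) := by
    rw [hR, le_div_iff₀ hm0']
    nlinarith
  have hχn : χ ≤ n := by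
    have h1 := G.colorable_of_fintype.chromaticNumber_le
    rw [hχ, hn] at h1
    exact_mod_cast h1
  have hineq : (χ : ℝ) ≤ 2 * AG G / (2 * (m:ℝ) / (n:ℝ)) :=
    le_trans (by exact_mod_cast hχn) hnR
  refine ⟨hineq, ?_, ?_⟩
  · intro heq
    have hχeqn : χ = n := by
      have h1 : (n:ℝ) ≤ (χ:ℝ) := heq ▸ hnR
      have h2 : n ≤ χ := by exact_mod_cast h1
      omega
    have hcomp : G = ⊤ := by
      ext a b
      simp only [top_adj]
      constructor
      · exact fun h => G.ne_of_adj h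
      · intro hab
        by_contra hna
        have h3 := aux_not_complete G hab hna
        rw [hχ, hn] at h3
        have h4 : χ ≤ n - 1 := by exact_mod_cast h3
        omega
    subst hcomp
    exact ⟨(completeGraph_eq_top V ▸ completeGraph_eq_top (Fin n) ▸
      Iso.completeGraph (Fintype.equivFinOfCardEq hn) : _)⟩
  · rintro ⟨f⟩
    have hcomp : G = ⊤ := by
      ext a b
      simp only [top_adj]
      constructor
      · exact fun h => G.ne_of_adj h
      · intro hab
        rw [← f.map_adj_iff]
        simp only [top_adj]
        exact fun e => hab (f.toEquiv.injective e)
    subst hcomp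
    have hdeg : ∀ u : V, ndeg (⊤ : SimpleGraph V) u = n - 1 := fun u => by
      rw [aux_ndeg_top, hn]
    have hAGeq : AG (⊤ : SimpleGraph V) = (m:ℝ) := by
      rw [← hm]
      exact aux_AG_regular _ (n-1) (by omega) hdeg
    have hχeq : χ = n := by
      rw [SimpleGraph.chromaticNumber_top, hn] at hχ
      exact_mod_cast hχ.symm
    rw [hχeq, hAGeq]
    field_simp
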